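/- Suppose u satisfies the incompressible (μ = 0) elastic Helmholtz equation ∇(λ·(div u)) + ρ·ω²·(1 − (γ/ω)·i)·u = q pointwise on ℝ^d. Then the scalar function λ·(div u) satisfies the acoustic Helmholtz equation ρ·div(ρ⁻¹·∇(λ·(div u))) + (ρ·ω²/λ)·(1 − (γ/ω)·i)·(λ·(div u)) = ρ·div(ρ⁻¹·q) pointwise on ℝ^d. -/

import Mathlib

noncomputable section

/-- The `i`-th partial derivative of a function `f : ℝ^d → E`. -/
def pderiv' {d : ℕ} {E : Type*} [NormedAddCommGroup E] [NormedSpace ℝ E]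
    (i : Fin d) (f : (Fin d → ℝ) → E) : (Fin d → ℝ) → E :=
  fun x => fderiv ℝ f x (Pi.single i 1)

/-- The divergence of a complex vector field `v : ℝ^d → ℂ^d`:
`(div v)(x) = ∑ i, ∂vᵢ/∂xᵢ(x)`. -/
def divC {d : ℕ} (v : (Fin d → ℝ) → (Fin d → ℂ)) : (Fin d → ℝ) → ℂ :=
  fun x => ∑ i, pderiv' i (fun y => v y i) x

/-- The gradient of a complex scalar function `f : ℝ^d → ℂ`:
the vector of partial derivatives. -/
def gradC {d : ℕ} (f : (Fin d → ℝ) → ℂ) : (Fin d → ℝ) → (Fin d → ℂ) :=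
  fun x j => pderiv' j f x

/-- If `u` satisfies the incompressible (`μ = 0`) elastic Helmholtz
equation `∇(λ·div u) + ρ·ω²·(1 − (γ/ω)·i)·u = q` pointwise on `ℝ^d`, then the scalar
function `λ·div u` satisfies the acoustic Helmholtz equation
`ρ·div(ρ⁻¹·∇(λ·div u)) + (ρ·ω²/λ)·(1 − (γ/ω)·i)·(λ·div u) = ρ·div(ρ⁻¹·q)`. -/
lemma contDiff_pderiv' {d : ℕ} (i : Fin d) {f : (Fin d → ℝ) → ℂ} {n : ℕ}
    (hf : ContDiff ℝ (n + 1 : ℕ) f) : ContDiff ℝ n (pderiv' i f) := by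
  have h : ContDiff ℝ n (fun x => fderiv ℝ f x) := by
    apply hf.fderiv_right
    norm_cast
  exact (ContinuousLinearMap.apply ℝ ℂ (Pi.single i 1 : Fin d → ℝ)).contDiff.comp h

lemma pderiv'_add {d : ℕ} (i : Fin d) {A B : (Fin d → ℝ) → ℂ} {x : Fin d → ℝ}
    (hA : DifferentiableAt ℝ A x) (hB : DifferentiableAt ℝ B x) :
    pderiv' i (fun y => A y + B y) x = pderiv' i A x + pderiv' i B x := by
  simp [pderiv', fderiv_fun_add hA hB]

lemma pderiv'_const_mul {d : ℕ} (i : Fin d) {A : (Fin d → ℝ) → ℂ} {x : Fin d → ℝ}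
    (c : ℂ) (hA : DifferentiableAt ℝ A x) :
    pderiv' i (fun y => c * A y) x = c * pderiv' i A x := by
  simp [pderiv', fderiv_const_mul hA c]

/-- main -/
theorem incompressible_reduction_to_acoustic (d : ℕ) (hd : 1 ≤ d)
    (om gam : ℝ) (hom : 0 < om)
    (rho lam : (Fin d → ℝ) → ℝ)
    (hrho_pos : ∀ x, 0 < rho x) (hlam_pos : ∀ x, 0 < lam x)
    (hrho : ContDiff ℝ 1 rho) (hlam : ContDiff ℝ 2 lam)
    (u : (Fin d → ℝ) → (Fin d → ℂ)) (hu : ContDiff ℝ 3 u)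
    (q : (Fin d → ℝ) → (Fin d → ℂ)) (hq : ContDiff ℝ 1 q)
    (heq : ∀ x j,
      gradC (fun y => (lam y : ℂ) * divC u y) x j +
        (rho x : ℂ) * (om : ℂ) ^ 2 * (1 - ((gam / om : ℝ) : ℂ) * Complex.I) * u x j =
      q x j) :
    ∀ x,
      (rho x : ℂ) *
          divC (fun y j => ((rho y : ℂ))⁻¹ *
            gradC (fun z => (lam z : ℂ) * divC u z) y j) x +
        ((rho x : ℂ) * (om : ℂ) ^ 2 / (lam x : ℂ)) *
          (1 - ((gam / om : ℝ) : ℂ) * Complex.I) * ((lam x : ℂ) * divC u x) =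
      (rho x : ℂ) * divC (fun y j => ((rho y : ℂ))⁻¹ * q y j) x := by
  intro x
  set c : ℂ := (om : ℂ) ^ 2 * (1 - ((gam / om : ℝ) : ℂ) * Complex.I) with hc
  set p : (Fin d → ℝ) → ℂ := fun z => (lam z : ℂ) * divC u z with hpdef
  -- smoothness
  have hdiv : ContDiff ℝ 2 (divC u) := by
    unfold divC
    exact ContDiff.sum fun i _ => contDiff_pderiv' i (n := 2)
      (by exact_mod_cast (contDiff_pi.1 hu i))
  have hp : ContDiff ℝ 2 p := by
    exact ((Complex.ofRealCLM.contDiff.of_le le_top).comp hlam).mul hdiv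
  have hgrad : ∀ j : Fin d, ContDiff ℝ 1 (pderiv' j p) :=
    fun j => contDiff_pderiv' j (n := 1) (by exact_mod_cast hp)
  have hrhone : ∀ y, ((rho y : ℂ)) ≠ 0 :=
    fun y => Complex.ofReal_ne_zero.2 (hrho_pos y).ne'
  have hinv : Differentiable ℝ (fun y => ((rho y : ℂ))⁻¹) := by
    intro y
    exact (Complex.ofRealCLM.differentiable.comp (hrho.differentiable one_ne_zero) y).inv (hrhone y)
  -- key pointwise identity
  have hkey : ∀ j : Fin d, (fun y => ((rho y : ℂ))⁻¹ * q y j) =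
      fun y => ((rho y : ℂ))⁻¹ * gradC p y j + c * u y j := by
    intro j
    funext y
    have h := heq y j
    rw [← h]
    field_simp [hc, hrhone y]
    ring
  -- divergence of RHS
  have hA : ∀ j : Fin d, DifferentiableAt ℝ (fun y => ((rho y : ℂ))⁻¹ * gradC p y j) x := by
    intro j
    exact (hinv x).mul (((hgrad j).differentiable one_ne_zero) x)
  have hB : ∀ j : Fin d, DifferentiableAt ℝ (fun y => u y j) x :=
    fun j => ((contDiff_pi.1 hu j).differentiable (by norm_num)) x
  have hdivsplit :
      divC (fun y j => ((rho y : ℂ))⁻¹ * q y j) x =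
        divC (fun y j => ((rho y : ℂ))⁻¹ * gradC p y j) x + c * divC u x := by
    unfold divC
    rw [Finset.mul_sum, ← Finset.sum_add_distrib]
    refine Finset.sum_congr rfl fun j _ => ?_
    have : (fun y => ((rho y : ℂ))⁻¹ * q y j) =
        fun y => ((rho y : ℂ))⁻¹ * gradC p y j + c * u y j := hkey j
    rw [this, pderiv'_add j (hA j) ((hB j).const_mul c),
      pderiv'_const_mul j c (hB j)]
  rw [hdivsplit]
  have hl : ((lam x : ℂ)) ≠ 0 := Complex.ofReal_ne_zero.2 (hlam_pos x).ne'
  field_simp [hc, hrhone x, hl]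
  ring

end
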